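/- Let c : 2^J → ℝ≥0 be monotone subadditive with c(∅)=0, p : J → ℝ≥0, |J| = n, m ≥ 2 machines, and OPT the optimal makespan (minimum over m-partitions of max_i(c(Xᵢ)+p(Xᵢ))). The list scheduling of singleton batches has makespan at most (1/m)·Σ_{j∈J}(c({j})+p_j) + max_{j∈J}(c({j})+p_j) ≤ (n/m + 1)·OPT. -/

import Mathlib

open Finset

/-- One step of greedy list scheduling: add processing time `t` to a machine of
currently minimum load. -/
noncomputable def greedyStep (m : ℕ) [NeZero m] (L : Fin m → ℝ) (t : ℝ) :
    Fin m → ℝ :=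
  Function.update L
    (Finset.exists_min_image Finset.univ L ⟨default, Finset.mem_univ _⟩).choose
    (L (Finset.exists_min_image Finset.univ L
        ⟨default, Finset.mem_univ _⟩).choose + t)

/-- Machine loads after greedily list-scheduling the batches with processing
times `T` (in order) on `m` machines. -/
noncomputable def greedyLoads (m : ℕ) [NeZero m] (T : List ℝ) : Fin m → ℝ :=
  T.foldl (greedyStep m) (fun _ => 0)

lemma greedyStep_sum (m : ℕ) [NeZero m] (L : Fin m → ℝ) (t : ℝ) :
    ∑ i, greedyStep m L t i = (∑ i, L i) + t := by
  unfold greedyStep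
  set i₀ := (Finset.exists_min_image Finset.univ L ⟨default, Finset.mem_univ _⟩).choose
  rw [Finset.sum_update_of_mem (Finset.mem_univ i₀)]
  have := Finset.add_sum_erase Finset.univ L (Finset.mem_univ i₀)
  rw [Finset.sdiff_singleton_eq_erase]
  linarith [this]

lemma greedyStep_le (m : ℕ) [NeZero m] (L : Fin m → ℝ) (t B : ℝ)
    (ht0 : 0 ≤ t) (htB : t ≤ B)
    (hB : ∀ i, L i ≤ (∑ i, L i) / m + B) :
    ∀ i, greedyStep m L t i ≤ ((∑ i, L i) + t) / m + B := by
  have hm0 : (0:ℝ) < m := by exact_mod_cast Nat.pos_of_ne_zero (NeZero.ne m)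
  obtain ⟨-, hmin⟩ := (Finset.exists_min_image Finset.univ L
    ⟨default, Finset.mem_univ _⟩).choose_spec
  set i₀ := (Finset.exists_min_image Finset.univ L ⟨default, Finset.mem_univ _⟩).choose
  have havg : L i₀ ≤ (∑ i, L i) / m := by
    rw [le_div_iff₀ hm0]
    have : (Finset.univ : Finset (Fin m)).card • L i₀ ≤ ∑ i, L i :=
      Finset.card_nsmul_le_sum _ _ _ (fun i _ => hmin i (Finset.mem_univ i))
    simpa [Finset.card_univ, nsmul_eq_mul, mul_comm] using this
  have hdiv : (∑ i, L i) / m ≤ ((∑ i, L i) + t) / m := by gcongr; linarith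
  intro i
  unfold greedyStep
  rcases eq_or_ne i i₀ with rfl | hne
  · rw [Function.update_self]; linarith
  · rw [Function.update_of_ne hne]; linarith [hB i]

lemma greedy_bound (m : ℕ) [NeZero m] (B : ℝ) :
    ∀ T : List ℝ, (∀ t ∈ T, 0 ≤ t ∧ t ≤ B) →
    ∀ L : Fin m → ℝ, (∀ i, L i ≤ (∑ i, L i) / m + B) →
    ∀ i, T.foldl (greedyStep m) L i ≤ ((∑ i, L i) + T.sum) / m + B := by
  intro T
  induction T with
  | nil => intro _ L hL i; simpa using hL i
  | cons t T ih =>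
    intro hT L hL i
    simp only [List.foldl_cons]
    have ht := hT t (List.mem_cons_self)
    have h1 := greedyStep_le m L t B ht.1 ht.2 hL
    have h2 := ih (fun s hs => hT s (List.mem_cons_of_mem _ hs)) (greedyStep m L t)
      (fun i => by rw [greedyStep_sum]; exact h1 i) i
    rw [greedyStep_sum] at h2
    simpa [List.sum_cons, add_assoc] using h2

/-- With `c` monotone subadditive, `c ∅ = 0`, `|J| = n`, `m ≥ 2` machines and
`OPT` the optimal makespan (minimum over `m`-partitions of
`maxᵢ (c(Xᵢ)+p(Xᵢ))`), list scheduling of the singleton batches has makespan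
at most `(1/m)·∑_{j∈J} (c({j})+p_j) + max_{j∈J} (c({j})+p_j) ≤ (n/m+1)·OPT`. -/
theorem stmt8 {α : Type*} [DecidableEq α] (J : Finset α) (hJ : J.Nonempty)
    (n m : ℕ) (hn : J.card = n) (hm : 2 ≤ m) [NeZero m]
    (c : Finset α → ℝ) (p : α → ℝ)
    (hc : ∀ S, 0 ≤ c S) (hp : ∀ j, 0 ≤ p j)
    (hmono : ∀ X Y : Finset α, X ⊆ Y → c X ≤ c Y)
    (hsub : ∀ X Y : Finset α, Disjoint X Y → c (X ∪ Y) ≤ c X + c Y)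
    (hempty : c ∅ = 0)
    (OPT : ℝ)
    (hOPTle : ∀ Y : Fin m → Finset α,
      (∀ i j, i ≠ j → Disjoint (Y i) (Y j)) → Finset.univ.sup Y = J →
      OPT ≤ Finset.univ.sup' ⟨⟨0, by omega⟩, Finset.mem_univ _⟩
        (fun i => c (Y i) + ∑ j ∈ Y i, p j))
    (hOPTex : ∃ Y : Fin m → Finset α,
      (∀ i j, i ≠ j → Disjoint (Y i) (Y j)) ∧ Finset.univ.sup Y = J ∧
      OPT = Finset.univ.sup' ⟨⟨0, by omega⟩, Finset.mem_univ _⟩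
        (fun i => c (Y i) + ∑ j ∈ Y i, p j)) :
    Finset.univ.sup' ⟨default, Finset.mem_univ _⟩
        (greedyLoads m (J.toList.map fun j => c {j} + p j)) ≤
      (∑ j ∈ J, (c {j} + p j)) / m + J.sup' hJ (fun j => c {j} + p j) ∧
    (∑ j ∈ J, (c {j} + p j)) / m + J.sup' hJ (fun j => c {j} + p j) ≤
      ((n : ℝ) / m + 1) * OPT := by
  have hm0 : (0:ℝ) < m := by exact_mod_cast Nat.pos_of_ne_zero (NeZero.ne m)
  set B := J.sup' hJ (fun j => c {j} + p j) with hB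
  -- every job j has c{j}+p j ≤ OPT
  obtain ⟨Y, hdisj, hcover, hOPT⟩ := hOPTex
  have hjob : ∀ j ∈ J, c {j} + p j ≤ OPT := by
    intro j hj
    have hj' : j ∈ Finset.univ.sup Y := hcover ▸ hj
    obtain ⟨i, -, hji⟩ := Finset.mem_sup.mp hj'
    have h1 : c {j} ≤ c (Y i) := hmono _ _ (Finset.singleton_subset_iff.mpr hji)
    have h2 : p j ≤ ∑ k ∈ Y i, p k :=
      Finset.single_le_sum (fun k _ => hp k) hji
    have h3 : c (Y i) + ∑ k ∈ Y i, p k ≤ OPT := by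
      rw [hOPT]
      exact Finset.le_sup' (fun i => c (Y i) + ∑ j ∈ Y i, p j) (Finset.mem_univ i)
    linarith
  have hBOPT : B ≤ OPT := Finset.sup'_le _ _ hjob
  have hOPT0 : 0 ≤ OPT := le_trans (by
    obtain ⟨j, hj⟩ := hJ
    have := hjob j hj
    have := hc {j}; have := hp j; linarith : (0:ℝ) ≤ OPT) le_rfl
  constructor
  · -- greedy bound
    apply Finset.sup'_le
    intro i _
    have hlist : ∀ t ∈ J.toList.map fun j => c {j} + p j, 0 ≤ t ∧ t ≤ B := by
      intro t ht
      rw [List.mem_map] at ht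
      obtain ⟨j, hj, rfl⟩ := ht
      rw [Finset.mem_toList] at hj
      exact ⟨by have := hc {j}; have := hp j; linarith,
        by rw [hB]; exact Finset.le_sup' (fun j => c {j} + p j) hj⟩
    have hB0 : 0 ≤ B := by
      obtain ⟨j, hj⟩ := hJ
      rw [hB]
      exact le_trans (by have := hc {j}; have := hp j; linarith)
        (Finset.le_sup' (fun j => c {j} + p j) hj)
    have h0 : ∀ i, (fun _ : Fin m => (0:ℝ)) i ≤ (∑ _i : Fin m, (0:ℝ)) / m + B := by
      intro i; simp [hB0]
    have := greedy_bound m B _ hlist _ h0 i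
    have hsum : (J.toList.map fun j => c {j} + p j).sum = ∑ j ∈ J, (c {j} + p j) :=
      Finset.sum_map_toList J _
    rw [hsum] at this
    simpa [greedyLoads] using this
  · -- OPT bound
    have hsumle : ∑ j ∈ J, (c {j} + p j) ≤ n * OPT := by
      calc ∑ j ∈ J, (c {j} + p j) ≤ ∑ _j ∈ J, OPT :=
            Finset.sum_le_sum (fun j hj => hjob j hj)
        _ = n * OPT := by rw [Finset.sum_const, hn, nsmul_eq_mul]
    have : (∑ j ∈ J, (c {j} + p j)) / m ≤ (n : ℝ) / m * OPT := by
      rw [div_mul_eq_mul_div]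
      gcongr
    linarith [this, hBOPT]
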